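/- Fix n ∈ ℕ and boolean vectors m, v : Fin n → Bool. Let G be the simple graph on the vertex type Fin n × Fin 4, writing a_j = (j,0), u_j = (j,1), b_j = (j,2), c_j = (j,3), with adjacency given by: c_j is adjacent to a_j and to b_j for every j; a_j is adjacent to u_j iff v j = false; u_j is adjacent to b_j iff m j = false; and there are no other edges. Then G has a perfect matching if and only if there is no j : Fin n with v j = true and m j = true. -/

import Mathlib

/-- OMv gadget for the existence of a perfect matching: on vertex set `Fin n × Fin 4` with
`a j = (j,0)`, `u j = (j,1)`, `b j = (j,2)`, `c j = (j,3)`, where `c j` is adjacent to `a j`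
and to `b j` for every `j`, `a j` is adjacent to `u j` iff `v j = false`, `u j` is adjacent to
`b j` iff `m j = false`, and there are no other edges. The graph has a perfect matching iff
the boolean inner product of `m` and `v` is `0`. -/
theorem omv_perfect_matching_gadget (n : ℕ) (m v : Fin n → Bool)
    (G : SimpleGraph (Fin n × Fin 4))
    (hG : ∀ x y : Fin n × Fin 4, G.Adj x y ↔
      (∃ j : Fin n, (x = (j, 3) ∧ y = (j, 0)) ∨ (x = (j, 0) ∧ y = (j, 3))) ∨
      (∃ j : Fin n, (x = (j, 3) ∧ y = (j, 2)) ∨ (x = (j, 2) ∧ y = (j, 3))) ∨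
      (∃ j : Fin n, v j = false ∧
        ((x = (j, 0) ∧ y = (j, 1)) ∨ (x = (j, 1) ∧ y = (j, 0)))) ∨
      (∃ j : Fin n, m j = false ∧
        ((x = (j, 1) ∧ y = (j, 2)) ∨ (x = (j, 2) ∧ y = (j, 1))))) :
    (∃ M : G.Subgraph, M.IsPerfectMatching) ↔
      ∀ j : Fin n, ¬(v j = true ∧ m j = true) := by
  classical
  constructor
  · rintro ⟨M, hM⟩ j ⟨hv, hm⟩
    obtain ⟨w, hw, -⟩ := hM.1 (hM.2 (j, 1))
    have h := (hG _ _).1 (M.adj_sub hw)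
    simp only [Prod.ext_iff] at h
    rcases h with ⟨k, ⟨⟨_, h2⟩, _⟩ | ⟨⟨_, h2⟩, _⟩⟩ | ⟨k, ⟨⟨_, h2⟩, _⟩ | ⟨⟨_, h2⟩, _⟩⟩ |
      ⟨k, hk, ⟨⟨_, h2⟩, _⟩ | ⟨⟨hk1, _⟩, _⟩⟩ | ⟨k, hk, ⟨⟨hk1, _⟩, _⟩ | ⟨⟨_, h2⟩, _⟩⟩ <;>
      first
        | exact absurd h2 (by decide)
        | (subst hk1; simp_all)
  · intro h
    set f : Fin n × Fin 4 → Fin n × Fin 4 := fun x =>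
      (x.1, if v x.1 then ![3, 2, 1, 0] x.2 else ![1, 0, 3, 2] x.2) with hf
    have hinv : ∀ x, f (f x) = x := by
      intro x
      rcases x with ⟨j, i⟩
      rcases hvj : v j with _ | _ <;> simp only [hf, hvj] <;>
        fin_cases i <;> rfl
    have hadj : ∀ x, G.Adj x (f x) := by
      intro x
      rcases x with ⟨j, i⟩
      rw [hG]
      rcases hvj : v j with _ | _
      · simp only [hf, hvj]
        fin_cases i
        · exact Or.inr (Or.inr (Or.inl ⟨j, hvj, Or.inl ⟨rfl, rfl⟩⟩))
        · exact Or.inr (Or.inr (Or.inl ⟨j, hvj, Or.inr ⟨rfl, rfl⟩⟩))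
        · exact Or.inr (Or.inl ⟨j, Or.inr ⟨rfl, rfl⟩⟩)
        · exact Or.inr (Or.inl ⟨j, Or.inl ⟨rfl, rfl⟩⟩)
      · have hmj : m j = false := by
          rcases hmj : m j with _ | _
          · rfl
          · exact absurd ⟨hvj, hmj⟩ (h j)
        simp only [hf, hvj]
        fin_cases i
        · exact Or.inl ⟨j, Or.inr ⟨rfl, rfl⟩⟩
        · exact Or.inr (Or.inr (Or.inr ⟨j, hmj, Or.inl ⟨rfl, rfl⟩⟩))
        · exact Or.inr (Or.inr (Or.inr ⟨j, hmj, Or.inr ⟨rfl, rfl⟩⟩))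
        · exact Or.inl ⟨j, Or.inl ⟨rfl, rfl⟩⟩
    refine ⟨⟨Set.univ, fun x y => f x = y, ?_, fun _ => Set.mem_univ _, ?_⟩, ?_⟩
    · rintro x y rfl
      exact hadj x
    · refine ⟨?_⟩
      rintro x y rfl
      exact hinv x
    · rw [SimpleGraph.Subgraph.isPerfectMatching_iff]
      intro x
      exact ⟨f x, rfl, fun y hy => Eq.symm hy⟩
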